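/- Let F = Q_p with p ≡ 3 mod 4, let H = Q_p[i,j] be the quaternion algebra with i² = p, j² = −1, ij = −ji, let G be the group of elements of reduced norm 1 in H, and let θ = Ad_i (conjugation by i) acting on G. Then there exists a closed double coset of H' = G^θ in G that is not stable under g ↦ θ(g)⁻¹; i.e. the symmetric pair (G, G^θ, Ad_i) is not stable. Concretely, the subgroup B ⊆ Q_p^× generated by norms from Q_p[ij] satisfies B/(Q_p^×)² ≅ Z/2Z generated by −p, and −p lies in N(Q_p[i]^×). -/

import Mathlib

open scoped Quaternion

noncomputable section

/-- Topology on the quaternion algebra over `ℚ_p`, induced from the coordinates. -/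
instance quatTopology (p : ℕ) [Fact p.Prime] (c₁ c₂ : ℚ_[p]) :
    TopologicalSpace ℍ[ℚ_[p], c₁, c₂] :=
  TopologicalSpace.induced (fun a => (a.re, a.imI, a.imJ, a.imK)) inferInstance

namespace Stmt18Aux

variable (p : ℕ) [hp : Fact p.Prime]

local notation "A" => ℍ[ℚ_[p], (p:ℚ_[p]), -1]

lemma sq_of_small (hodd : p % 4 = 3) (w : ℚ_[p]) (hw : ‖w‖ < 1) : ∃ s : ℚ_[p], s^2 = 1 + w := by
  set w' : ℤ_[p] := ⟨w, le_of_lt hw⟩ with hw'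
  have h2 : ‖(2 : ℤ_[p])‖ = 1 := by
    have hiff := PadicInt.norm_int_lt_one_iff_dvd (p := p) 2
    have h2le : ‖(2 : ℤ_[p])‖ ≤ 1 := PadicInt.norm_le_one _
    rcases lt_or_eq_of_le h2le with h | h
    · exfalso
      rw [show ((2:ℤ):ℤ_[p]) = (2:ℤ_[p]) by norm_cast] at hiff
      have hdvd : (p:ℤ) ∣ 2 := hiff.1 h
      have : p ∣ 2 := by exact_mod_cast hdvd
      have := (Nat.le_of_dvd (by norm_num) this)
      omega
    · exact h
  have hnorm : ‖(Polynomial.X^2 - Polynomial.C (1 + w') : Polynomial ℤ_[p]).eval 1‖ <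
      ‖(Polynomial.X^2 - Polynomial.C (1 + w') : Polynomial ℤ_[p]).derivative.eval 1‖ ^ 2 := by
    have e1 : (Polynomial.X^2 - Polynomial.C (1 + w') : Polynomial ℤ_[p]).eval 1 = -w' := by
      simp
    have e2 : (Polynomial.X^2 - Polynomial.C (1 + w') : Polynomial ℤ_[p]).derivative.eval 1 = 2 := by
      simp [Polynomial.derivative_sub, Polynomial.derivative_pow]
    rw [e1, e2, h2, norm_neg]
    simpa [hw', PadicInt.norm_def] using hw
  obtain ⟨z, hz, -⟩ := hensels_lemma hnorm
  refine ⟨(z : ℚ_[p]), ?_⟩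
  have hzz : z^2 = 1 + w' := by
    simp [Polynomial.eval_sub, Polynomial.eval_pow, sub_eq_zero] at hz
    exact hz
  calc (z:ℚ_[p])^2 = ((z^2 : ℤ_[p]) : ℚ_[p]) := by push_cast; ring
    _ = ((1 + w' : ℤ_[p]) : ℚ_[p]) := by rw [hzz]
    _ = 1 + w := by push_cast [hw']; rfl

lemma norms_ne (x y : ℚ_[p]) (hx : x ≠ 0) (hy : y ≠ 0) : ‖x^2‖ ≠ ‖(p:ℚ_[p]) * y^2‖ := by
  have hpne : ((p:ℚ_[p])) ≠ 0 := Nat.cast_ne_zero.2 hp.1.ne_zero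
  have hx2 : x^2 ≠ 0 := pow_ne_zero _ hx
  have hy2 : (p:ℚ_[p]) * y^2 ≠ 0 := mul_ne_zero hpne (pow_ne_zero _ hy)
  have v1 : (x^2).valuation = 2 * x.valuation := by
    rw [sq, Padic.valuation_mul hx hx]; ring
  have v2 : ((p:ℚ_[p]) * y^2).valuation = 1 + 2 * y.valuation := by
    rw [Padic.valuation_mul hpne (pow_ne_zero _ hy), Padic.valuation_p, sq,
      Padic.valuation_mul hy hy]; ring
  intro h
  rw [Padic.norm_eq_zpow_neg_valuation hx2, Padic.norm_eq_zpow_neg_valuation hy2] at h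
  have hp1 : (1:ℝ) < (p:ℝ) := by exact_mod_cast hp.1.one_lt
  have := zpow_right_injective₀ (by positivity) (ne_of_gt hp1) h
  rw [v1, v2] at this
  omega

lemma neg_p_not_sq : ¬ ∃ v : ℚ_[p], (-(p:ℚ_[p])) = v^2 := by
  rintro ⟨v, hv⟩
  have hpne : ((p:ℚ_[p])) ≠ 0 := Nat.cast_ne_zero.2 hp.1.ne_zero
  have hv0 : v ≠ 0 := by rintro rfl; rw [ne_eq, ← neg_eq_zero] at hpne; exact hpne (by rw [hv]; ring)
  have h1 : (-(p:ℚ_[p])).valuation = 1 := by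
    rw [show (-(p:ℚ_[p])) = (-1) * p by ring, Padic.valuation_mul (by norm_num) hpne,
      Padic.valuation_p]
    have : ((-1 : ℚ_[p])).valuation = 0 := by
      have h := Padic.valuation_intCast (p := p) (-1)
      push_cast at h
      rw [h]; simp [padicValInt]
    rw [this]; ring
  have h2 : (v^2).valuation = 2 * v.valuation := by
    rw [sq, Padic.valuation_mul hv0 hv0]; ring
  rw [hv, h2] at h1
  omega

lemma norm_class (hodd : p % 4 = 3) (t : ℚ_[p]) (ht : t ≠ 0)
    (h : ∃ x y : ℚ_[p], t = x ^ 2 - p * y ^ 2) :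
    (∃ v : ℚ_[p], t = v ^ 2) ∨ ∃ v : ℚ_[p], t = (-(p : ℚ_[p])) * v ^ 2 := by
  obtain ⟨x, y, rfl⟩ := h
  have hpne : ((p:ℚ_[p])) ≠ 0 := Nat.cast_ne_zero.2 hp.1.ne_zero
  by_cases hy : y = 0
  · exact Or.inl ⟨x, by rw [hy]; ring⟩
  by_cases hx : x = 0
  · exact Or.inr ⟨y, by rw [hx]; ring⟩
  have hne := norms_ne p x y hx hy
  have hx2 : x^2 ≠ 0 := pow_ne_zero _ hx
  have hy2 : (p:ℚ_[p]) * y^2 ≠ 0 := mul_ne_zero hpne (pow_ne_zero _ hy)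
  rcases lt_or_gt_of_ne hne with hlt | hgt
  · obtain ⟨s, hs⟩ := sq_of_small p hodd (-(x^2 / ((p:ℚ_[p]) * y^2))) (by
      rw [norm_neg, norm_div]
      exact (div_lt_one (norm_pos_iff.2 hy2)).2 hlt)
    refine Or.inr ⟨y * s, ?_⟩
    have : (y*s)^2 = y^2 * (1 + -(x^2 / ((p:ℚ_[p]) * y^2))) := by rw [mul_pow, hs]
    rw [this]
    field_simp
    ring
  · obtain ⟨s, hs⟩ := sq_of_small p hodd (-((p:ℚ_[p]) * y^2 / x^2)) (by
      rw [norm_neg, norm_div]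
      exact (div_lt_one (norm_pos_iff.2 hx2)).2 hgt)
    refine Or.inl ⟨x * s, ?_⟩
    have : (x*s)^2 = x^2 * (1 + -((p:ℚ_[p]) * y^2 / x^2)) := by rw [mul_pow, hs]
    rw [this]
    field_simp
    ring

lemma theta_eq (a : A) :
    ((p : ℚ_[p])⁻¹) • ((⟨0,1,0,0⟩ : A) * a * ⟨0,1,0,0⟩) = ⟨a.re, a.imI, -a.imJ, -a.imK⟩ := by
  have hpne : ((p:ℚ_[p])) ≠ 0 := Nat.cast_ne_zero.2 hp.1.ne_zero
  ext <;> simp <;> field_simp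

lemma fixchar (a : A) :
    (a * star a = 1 ∧ ((p : ℚ_[p])⁻¹) • ((⟨0,1,0,0⟩ : A) * a * ⟨0,1,0,0⟩) = a) ↔
      (a.imJ = 0 ∧ a.imK = 0 ∧ a.re^2 - p * a.imI^2 = 1) := by
  rw [theta_eq]
  constructor
  · rintro ⟨h1, h2⟩
    rw [QuaternionAlgebra.ext_iff] at h1 h2
    have hJ : -a.imJ = a.imJ := h2.2.2.1
    have hK : -a.imK = a.imK := h2.2.2.2
    have hJ0 : a.imJ = 0 := by
      have h2' : (2:ℚ_[p]) * a.imJ = 0 := by linear_combination -hJ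
      rcases mul_eq_zero.mp h2' with h | h
      · exact absurd h two_ne_zero
      · exact h
    have hK0 : a.imK = 0 := by
      have h2' : (2:ℚ_[p]) * a.imK = 0 := by linear_combination -hK
      rcases mul_eq_zero.mp h2' with h | h
      · exact absurd h two_ne_zero
      · exact h
    refine ⟨hJ0, hK0, ?_⟩
    have hre := h1.1
    simp [QuaternionAlgebra.re_mul, hJ0, hK0] at hre
    linear_combination hre
  · rintro ⟨hJ, hK, hn⟩
    refine ⟨?_, ?_⟩
    · ext <;> simp [hJ, hK] <;> first | ring1 | linear_combination hn
    · ext <;> simp [hJ, hK]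

lemma mulform (x₁ y₁ x₂ y₂ z : ℚ_[p]) :
    (⟨x₁,y₁,0,0⟩ : A) * ⟨0,1,z,0⟩ * ⟨x₂,y₂,0,0⟩ =
      ⟨p*(x₁*y₂+x₂*y₁), x₁*x₂+p*y₁*y₂, z*(x₁*x₂-p*y₁*y₂), z*(y₁*x₂-x₁*y₂)⟩ := by
  ext <;> simp <;> ring

lemma t2A : T2Space A := by
  refine T2Space.of_injective_continuous (f := fun a : A => (a.re, a.imI, a.imJ, a.imK)) ?_
    continuous_induced_dom
  intro a b h
  simp only [Prod.mk.injEq] at h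
  ext <;> tauto

lemma hsBound (x y : ℚ_[p]) (hxy : x^2 - p*y^2 = 1) : ‖x‖ ≤ 1 ∧ ‖y‖ ≤ 1 := by
  have hne := norms_ne p
  have hp1 : (1:ℝ) < (p:ℝ) := by exact_mod_cast hp.1.one_lt
  have hy : ‖y‖ ≤ 1 := by
    by_contra hy1
    push_neg at hy1
    have hy0 : y ≠ 0 := by rintro rfl; simp at hy1; linarith
    have hgt : (1:ℝ) < ‖(p:ℚ_[p]) * y^2‖ := by
      rw [norm_mul, Padic.norm_p, norm_pow,
        Padic.norm_eq_zpow_neg_valuation hy0]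
      rw [Padic.norm_eq_zpow_neg_valuation hy0] at hy1
      have hv : 0 < -y.valuation := by
        by_contra hv
        push_neg at hv
        have : ((p:ℝ)) ^ (-y.valuation) ≤ 1 := zpow_le_one_of_nonpos₀ (le_of_lt hp1) hv
        linarith
      have hppos : (0:ℝ) < (p:ℝ) := by linarith
      have : (p:ℝ)⁻¹ * ((p:ℝ) ^ (-y.valuation))^2 = (p:ℝ) ^ (-1 + 2*(-y.valuation)) := by
        rw [← zpow_neg_one, ← zpow_natCast ((p:ℝ) ^ (-y.valuation)) 2, ← zpow_mul,
          ← zpow_add₀ (ne_of_gt hppos)]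
        norm_num
        ring_nf
      rw [this]
      apply one_lt_zpow₀ hp1
      omega
    have hx2 : x^2 = 1 + (p:ℚ_[p])*y^2 := by linear_combination hxy
    have hnn : ‖(1:ℚ_[p])‖ ≠ ‖(p:ℚ_[p])*y^2‖ := by rw [norm_one]; exact ne_of_lt hgt
    have hmax : ‖x^2‖ = max ‖(1:ℚ_[p])‖ ‖(p:ℚ_[p])*y^2‖ := by
      rw [hx2]; exact Padic.add_eq_max_of_ne hnn
    have hx0 : x ≠ 0 := by
      rintro rfl
      have hneg : (p:ℚ_[p])*y^2 = -1 := by linear_combination -hx2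
      rw [hneg] at hgt
      simp at hgt
    have hfin : ‖x^2‖ = ‖(p:ℚ_[p])*y^2‖ := by
      rw [hmax, norm_one]
      exact max_eq_right (le_of_lt hgt)
    exact hne x y hx0 hy0 hfin
  refine ⟨?_, hy⟩
  have hx2 : x^2 = 1 + (p:ℚ_[p])*y^2 := by linear_combination hxy
  have h1 : ‖x^2‖ ≤ 1 := by
    rw [hx2]
    refine le_trans (Padic.nonarchimedean _ _) ?_
    apply max_le
    · simp
    · rw [norm_mul, Padic.norm_p, norm_pow]
      have : ‖y‖^2 ≤ 1 := by nlinarith [norm_nonneg y]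
      have hpinv : ((p:ℝ))⁻¹ ≤ 1 := by rw [inv_le_one_iff₀]; right; linarith
      nlinarith [norm_nonneg y, inv_pos.2 (by linarith : (0:ℝ) < (p:ℝ))]
  rw [norm_pow] at h1
  nlinarith [norm_nonneg x]

def Hs : Set (ℚ_[p] × ℚ_[p]) := {v | v.1^2 - p*v.2^2 = 1}

def fmap (z : ℚ_[p]) : (ℚ_[p] × ℚ_[p]) × (ℚ_[p] × ℚ_[p]) → A :=
  fun v : (ℚ_[p] × ℚ_[p]) × (ℚ_[p] × ℚ_[p]) =>
    (⟨v.1.1, v.1.2, 0, 0⟩ : A) * (⟨0,1,z,0⟩ : A) * (⟨v.2.1, v.2.2, 0, 0⟩ : A)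

lemma fmap_cont (z : ℚ_[p]) : Continuous (fmap p z) := by
  rw [continuous_induced_rng]
  have : (fun a : A => (a.re, a.imI, a.imJ, a.imK)) ∘ (fmap p z) =
      fun v : (ℚ_[p] × ℚ_[p]) × (ℚ_[p] × ℚ_[p]) =>
        ((p:ℚ_[p])*(v.1.1*v.2.2+v.2.1*v.1.2), v.1.1*v.2.1+p*v.1.2*v.2.2,
        z*(v.1.1*v.2.1-p*v.1.2*v.2.2), z*(v.1.2*v.2.1-v.1.1*v.2.2)) := by
    funext v
    simp only [Function.comp_apply, fmap, mulform]
  rw [this]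
  fun_prop

lemma hs_compact : IsCompact (Hs p) := by
  have hsub : Hs p ⊆ (Metric.closedBall 0 1) ×ˢ (Metric.closedBall 0 1) := by
    rintro ⟨x, y⟩ hv
    have := hsBound p x y hv
    simp only [Set.mem_prod, Metric.mem_closedBall, dist_zero_right]
    exact ⟨this.1, this.2⟩
  refine IsCompact.of_isClosed_subset
    ((isCompact_closedBall _ _).prod (isCompact_closedBall _ _)) ?_ hsub
  have : Hs p = (fun v : ℚ_[p] × ℚ_[p] => v.1^2 - p*v.2^2) ⁻¹' {1} := by
    ext v; simp [Hs]
  rw [this]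
  exact IsClosed.preimage (by fun_prop) isClosed_singleton

end Stmt18Aux

open Stmt18Aux in
/-- The pair `(G, G^θ, Ad_i)` for the norm-one group `G` of the quaternion algebra
`ℍ[ℚ_p, p, -1]` (`p ≡ 3 mod 4`) with `θ = Ad_i` is not stable: some closed double coset
of `H = G^θ` in `G` is not preserved by `σ : g ↦ θ(g)⁻¹`.  Concretely, the group `B` of
norms from `ℚ_p[ij] = ℚ_p[√p]` satisfies `B/(ℚ_p^×)² ≅ ℤ/2ℤ` generated by the nonsquare
`-p`, and `-p` is a norm from `ℚ_p[i]`. -/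
theorem stmt_18 (p : ℕ) [Fact p.Prime] (hp : p % 4 = 3) :
    -- notation: the quaternion algebra, i, θ = Ad_i, σ, G and H = G^θ
    ∀ (i : ℍ[ℚ_[p], (p : ℚ_[p]), -1]) (_ : i = ⟨0, 1, 0, 0⟩)
      (θ : ℍ[ℚ_[p], (p : ℚ_[p]), -1] → ℍ[ℚ_[p], (p : ℚ_[p]), -1])
      (_ : θ = fun a => ((p : ℚ_[p])⁻¹) • (i * a * i))
      (G : Set ℍ[ℚ_[p], (p : ℚ_[p]), -1]) (_ : G = {a | a * star a = 1}),
    -- (1) the pair is not stable: a closed, non-σ-stable double coset exists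
    (∃ g ∈ G, IsClosed {x | ∃ h₁ ∈ G, ∃ h₂ ∈ G,
          θ h₁ = h₁ ∧ θ h₂ = h₂ ∧ x = h₁ * g * h₂} ∧
        ¬ ((fun a => θ (star a)) '' {x | ∃ h₁ ∈ G, ∃ h₂ ∈ G,
              θ h₁ = h₁ ∧ θ h₂ = h₂ ∧ x = h₁ * g * h₂}
            = {x | ∃ h₁ ∈ G, ∃ h₂ ∈ G, θ h₁ = h₁ ∧ θ h₂ = h₂ ∧ x = h₁ * g * h₂})) ∧
    -- (2) B/(ℚ_p^×)² ≅ ℤ/2ℤ, generated by -p: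
    (∀ t : ℚ_[p], t ≠ 0 → (∃ x y : ℚ_[p], t = x ^ 2 - p * y ^ 2) →
        ((∃ v : ℚ_[p], t = v ^ 2) ∨ ∃ v : ℚ_[p], t = (-(p : ℚ_[p])) * v ^ 2)) ∧
    (¬ ∃ v : ℚ_[p], (-(p : ℚ_[p])) = v ^ 2) ∧
    -- (3) -p is a norm from ℚ_p[i]:
    (∃ x y : ℚ_[p], (-(p : ℚ_[p])) = x ^ 2 - p * y ^ 2) := by
  intro i hi θ hθ G hG
  subst hi hθ hG
  have hprime : Fact p.Prime := ‹_›
  have hpne : ((p:ℚ_[p])) ≠ 0 := Nat.cast_ne_zero.2 hprime.1.ne_zero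
  have hp1R : (1:ℝ) < (p:ℝ) := by exact_mod_cast hprime.1.one_lt
  have hpsmall : ‖(p:ℚ_[p])‖ < 1 := by
    rw [Padic.norm_p]
    rw [inv_lt_one_iff₀]; right; exact hp1R
  obtain ⟨z, hz⟩ := sq_of_small p hp (p:ℚ_[p]) hpsmall
  have hz0 : z ≠ 0 := by
    intro h
    rw [h] at hz
    have : ((1+p : ℕ) : ℚ_[p]) = 0 := by push_cast; linear_combination -hz
    exact Nat.cast_ne_zero.2 (by omega) this
  refine ⟨?_, fun t ht hex => norm_class p hp t ht hex, neg_p_not_sq p, ?_⟩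
  swap
  · -- part (3): -p = p^2 - p * z^2 with z^2 = 1 + p
    exact ⟨(p:ℚ_[p]), z, by rw [hz]; ring⟩
  -- part (1)
  set g : ℍ[ℚ_[p], (p:ℚ_[p]), -1] := ⟨0,1,z,0⟩ with hgdef
  have hgG : g ∈ {a : ℍ[ℚ_[p], (p:ℚ_[p]), -1] | a * star a = 1} := by
    show g * star g = 1
    ext <;> simp [hgdef] <;> linear_combination hz
  have hSdesc : {x | ∃ h₁ ∈ {a : ℍ[ℚ_[p], (p:ℚ_[p]), -1] | a * star a = 1},
      ∃ h₂ ∈ {a : ℍ[ℚ_[p], (p:ℚ_[p]), -1] | a * star a = 1},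
      (fun a => ((p : ℚ_[p])⁻¹) • ((⟨0,1,0,0⟩ : ℍ[ℚ_[p], (p:ℚ_[p]), -1]) * a * ⟨0,1,0,0⟩)) h₁ = h₁ ∧
      (fun a => ((p : ℚ_[p])⁻¹) • ((⟨0,1,0,0⟩ : ℍ[ℚ_[p], (p:ℚ_[p]), -1]) * a * ⟨0,1,0,0⟩)) h₂ = h₂ ∧
      x = h₁ * g * h₂} = fmap p z '' (Hs p ×ˢ Hs p) := by
    ext x
    constructor
    · rintro ⟨h₁, hG1, h₂, hG2, hf1, hf2, rfl⟩
      obtain ⟨hJ1, hK1, hn1⟩ := (fixchar p h₁).1 ⟨hG1, hf1⟩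
      obtain ⟨hJ2, hK2, hn2⟩ := (fixchar p h₂).1 ⟨hG2, hf2⟩
      refine ⟨((h₁.re, h₁.imI), (h₂.re, h₂.imI)), ⟨hn1, hn2⟩, ?_⟩
      have hh₁ : (⟨h₁.re, h₁.imI, 0, 0⟩ : ℍ[ℚ_[p], (p:ℚ_[p]), -1]) = h₁ := by
        ext <;> simp [hJ1, hK1]
      have hh₂ : (⟨h₂.re, h₂.imI, 0, 0⟩ : ℍ[ℚ_[p], (p:ℚ_[p]), -1]) = h₂ := by
        ext <;> simp [hJ2, hK2]
      simp only [fmap]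
      rw [hh₁, hh₂]
    · rintro ⟨⟨v₁, v₂⟩, ⟨hv₁, hv₂⟩, rfl⟩
      simp only [Hs, Set.mem_setOf_eq] at hv₁ hv₂
      have c₁ := (fixchar p (⟨v₁.1, v₁.2, 0, 0⟩ : ℍ[ℚ_[p], (p:ℚ_[p]), -1])).2 ⟨rfl, rfl, hv₁⟩
      have c₂ := (fixchar p (⟨v₂.1, v₂.2, 0, 0⟩ : ℍ[ℚ_[p], (p:ℚ_[p]), -1])).2 ⟨rfl, rfl, hv₂⟩
      exact ⟨⟨v₁.1, v₁.2, 0, 0⟩, c₁.1, ⟨v₂.1, v₂.2, 0, 0⟩, c₂.1, c₁.2, c₂.2, rfl⟩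
  refine ⟨g, hgG, ?_, ?_⟩
  · -- closedness
    haveI := t2A p
    rw [hSdesc]
    exact (((hs_compact p).prod (hs_compact p)).image (fmap_cont p z)).isClosed
  · -- non-stability
    intro heq
    have h10 : ((1:ℚ_[p]), (0:ℚ_[p])) ∈ Hs p := by simp [Hs]
    have hgS := (Set.ext_iff.mp hSdesc g).mpr
      ⟨((1,0),(1,0)), ⟨h10, h10⟩, by simp only [fmap]; ext <;> simp [hgdef]⟩
    have hσg : ((p : ℚ_[p])⁻¹) • ((⟨0,1,0,0⟩ : ℍ[ℚ_[p], (p:ℚ_[p]), -1]) * star g * ⟨0,1,0,0⟩)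
        = (⟨0,-1,z,0⟩ : ℍ[ℚ_[p], (p:ℚ_[p]), -1]) := by
      ext <;> simp [hgdef] <;> field_simp
    have hmem := (Set.ext_iff.mp hSdesc _).mp ((Set.ext_iff.mp heq _).mp ⟨g, hgS, hσg⟩)
    obtain ⟨⟨v₁, v₂⟩, ⟨hv₁, hv₂⟩, hfeq⟩ := hmem
    simp only [Hs, Set.mem_setOf_eq] at hv₁ hv₂
    set x₁ := v₁.1; set y₁ := v₁.2; set x₂ := v₂.1; set y₂ := v₂.2
    have heq2 : (⟨(p:ℚ_[p])*(x₁*y₂+x₂*y₁), x₁*x₂+p*y₁*y₂, z*(x₁*x₂-p*y₁*y₂),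
        z*(y₁*x₂-x₁*y₂)⟩ : ℍ[ℚ_[p], (p:ℚ_[p]), -1]) = ⟨0,-1,z,0⟩ := by
      rw [← mulform]
      exact hfeq
    rw [QuaternionAlgebra.ext_iff] at heq2
    have E1 : (p:ℚ_[p])*(x₁*y₂+x₂*y₁) = 0 := heq2.1
    have E2 : x₁*x₂+(p:ℚ_[p])*y₁*y₂ = -1 := heq2.2.1
    have E3 : z*(x₁*x₂-(p:ℚ_[p])*y₁*y₂) = z := heq2.2.2.1
    have E4 : z*(y₁*x₂-x₁*y₂) = 0 := heq2.2.2.2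
    have E3' : x₁*x₂ - (p:ℚ_[p])*y₁*y₂ = 1 :=
      mul_left_cancel₀ hz0 (by rw [mul_one]; exact E3)
    have E1' : x₁*y₂ + x₂*y₁ = 0 :=
      mul_left_cancel₀ hpne (by rw [mul_zero]; exact E1)
    have E4' : y₁*x₂ - x₁*y₂ = 0 :=
      mul_left_cancel₀ hz0 (by rw [mul_zero]; exact E4)
    have hyy : (p:ℚ_[p])*(y₁*y₂) = -1 := by linear_combination ((1:ℚ_[p])/2) * E2 - (1/2) * E3'
    have hx2y1 : x₂*y₁ = 0 := by
      have h2' : (2:ℚ_[p]) * (x₂*y₁) = 0 := by linear_combination E1' + E4'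
      rcases mul_eq_zero.mp h2' with h | h
      · exact absurd h two_ne_zero
      · exact h
    have hy1 : y₁ ≠ 0 := by
      rintro h
      rw [h] at hyy
      simp at hyy
    have hy2 : y₂ ≠ 0 := by
      rintro h
      rw [h] at hyy
      simp at hyy
    have hx2 : x₂ = 0 := by
      rcases mul_eq_zero.mp hx2y1 with h | h
      · exact h
      · exact absurd h hy1
    have hx1 : x₁ = 0 := by
      have hx1y2 : x₁*y₂ = 0 := by
        have hyx : y₁*x₂ = 0 := by rw [hx2]; ring
        linear_combination hyx - E4'
      rcases mul_eq_zero.mp hx1y2 with h | h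
      · exact h
      · exact absurd h hy2
    refine neg_p_not_sq p ⟨y₁⁻¹, ?_⟩
    rw [hx1] at hv₁
    field_simp
    linear_combination hv₁

end
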